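/- Let w_1,…,w_k ∈ ℂ^d (d ≥ 2) be vectors each of which has nonzero first coordinate, and suppose that for every integer ℓ with 0 < ℓ < d, every ℓ-dimensional linear subspace of ℂ^d contains at most (ℓ/d)·k of the vectors w_1,…,w_k (counted with multiplicity). Then the multiset of matrices {Δ(w_1),…,Δ(w_k)} ⊂ ℂ^{(d−1)×d} is well-spread. -/

import Mathlib

open Matrix BigOperators
open scoped ComplexOrder

noncomputable section

/-- A (multi)set of `s` complex `r x c` matrices, given as an indexed family, is well-spread
if for every subspace `V` of `ℂ^c` the sum of the dimensions of the images `A_i(V)` is at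
least `(r*s/c) * dim V`. -/
def WellSpread {r c s : ℕ} (B : Fin s → Matrix (Fin r) (Fin c) ℂ) : Prop :=
  ∀ V : Submodule ℂ (Fin c → ℂ),
    ((r : ℝ) * s / c) * (Module.finrank ℂ V) ≤
      ∑ i, ((Module.finrank ℂ (V.map (B i).mulVecLin) : ℝ))

/-- For `w ∈ ℂ^d`, the `(d-1) × d` matrix whose row indexed by `i` (corresponding to
`ℓ = i + 2` in 1-based indexing) has entry `w_{i+1}` in column `0`, entry `-w_0` in column
`i+1`, and zeros elsewhere. -/
def Delta {d : ℕ} (w : Fin d → ℂ) : Matrix (Fin (d - 1)) (Fin d) ℂ :=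
  fun i j =>
    if (j : ℕ) = 0 then w ⟨i.1 + 1, by have := i.isLt; omega⟩
    else if (j : ℕ) = i.1 + 1 then -w ⟨0, by have := i.isLt; omega⟩
    else 0

private lemma delta_mulVec {d : ℕ} (hd : 2 ≤ d) (w v : Fin d → ℂ) (i : Fin (d-1)) :
    (Delta w).mulVec v i =
      w ⟨i.1 + 1, by omega⟩ * v ⟨0, lt_of_lt_of_le two_pos hd⟩ - w ⟨0, lt_of_lt_of_le two_pos hd⟩ * v ⟨i.1 + 1, by omega⟩ := by
  have hi : i.1 + 1 < d := by omega
  set j0 : Fin d := ⟨0, lt_of_lt_of_le two_pos hd⟩ with hj0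
  set j1 : Fin d := ⟨i.1 + 1, hi⟩ with hj1
  have hne : j0 ≠ j1 := by simp [hj0, hj1, Fin.ext_iff]
  calc (Delta w).mulVec v i
      = ∑ j : Fin d, (Delta w) i j * v j := rfl
    _ = ∑ j : Fin d, ((if j = j0 then w j1 * v j0 else 0) +
          (if j = j1 then (-w j0) * v j1 else 0)) := by
        refine Finset.sum_congr rfl fun j _ => ?_
        rcases eq_or_ne j j0 with rfl | h0
        · simp [Delta, hne.symm, hj0, hj1]
        · rcases eq_or_ne j j1 with rfl | h1
          · have : (j1 : ℕ) ≠ 0 := by simp [hj1]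
            simp [Delta, this, h0, hj1, hj0]
          · have h0' : (j : ℕ) ≠ 0 := fun h => h0 (Fin.ext h)
            have h1' : (j : ℕ) ≠ i.1 + 1 := fun h => h1 (Fin.ext h)
            simp [Delta, h0', h1', h0, h1]
    _ = w j1 * v j0 + (-w j0) * v j1 := by
        rw [Finset.sum_add_distrib, Finset.sum_ite_eq', Finset.sum_ite_eq']
        simp
    _ = w j1 * v j0 - w j0 * v j1 := by ring

private lemma ker_delta {d : ℕ} (hd : 2 ≤ d) (w : Fin d → ℂ) (hw : w ⟨0, lt_of_lt_of_le two_pos hd⟩ ≠ 0) :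
    LinearMap.ker (Delta w).mulVecLin = Submodule.span ℂ {w} := by
  ext v
  rw [LinearMap.mem_ker, Submodule.mem_span_singleton]
  constructor
  · intro h
    have hv : ∀ i : Fin (d-1),
        w ⟨i.1 + 1, by omega⟩ * v ⟨0, lt_of_lt_of_le two_pos hd⟩ = w ⟨0, lt_of_lt_of_le two_pos hd⟩ * v ⟨i.1 + 1, by omega⟩ := by
      intro i
      have h' := congrFun h i
      rw [Matrix.mulVecLin_apply, delta_mulVec hd, Pi.zero_apply, sub_eq_zero] at h'
      exact h'
    refine ⟨v ⟨0, lt_of_lt_of_le two_pos hd⟩ / w ⟨0, lt_of_lt_of_le two_pos hd⟩, funext fun j => ?_⟩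
    rcases Nat.eq_zero_or_pos j.1 with h0 | h0
    · have hje : j = ⟨0, lt_of_lt_of_le two_pos hd⟩ := Fin.ext h0
      rw [hje]
      simp only [Pi.smul_apply, smul_eq_mul]
      field_simp
    · have hj : j.1 - 1 < d - 1 := by have := j.isLt; omega
      have hji : j = ⟨(⟨j.1 - 1, hj⟩ : Fin (d-1)).1 + 1, by omega⟩ := Fin.ext (by simp; omega)
      have := hv ⟨j.1 - 1, hj⟩
      rw [← hji] at this
      simp only [Pi.smul_apply, smul_eq_mul]
      rw [div_mul_eq_mul_div, div_eq_iff hw]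
      linear_combination this
  · rintro ⟨c, rfl⟩
    funext i
    rw [Matrix.mulVecLin_apply, delta_mulVec hd]
    simp only [Pi.smul_apply, smul_eq_mul, Pi.zero_apply]
    ring

private theorem delta_aux_main {d k : ℕ} (hd : 2 ≤ d) (w : Fin k → Fin d → ℂ)
    (hw : ∀ i, w i ⟨0, lt_of_lt_of_le two_pos hd⟩ ≠ 0)
    (hsub : ∀ ℓ : ℕ, 0 < ℓ → ℓ < d → ∀ V : Submodule ℂ (Fin d → ℂ),
      Module.finrank ℂ V = ℓ →
      (({i : Fin k | w i ∈ V}).ncard : ℝ) ≤ ((ℓ : ℝ) / d) * k) :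
    ∀ V : Submodule ℂ (Fin d → ℂ),
    (((d-1 : ℕ) : ℝ) * k / d) * (Module.finrank ℂ V) ≤
      ∑ i, ((Module.finrank ℂ (V.map ((fun i => Delta (w i)) i).mulVecLin) : ℝ)) := by
  classical
  intro V
  set n := Module.finrank ℂ V with hn
  have hwne : ∀ i, w i ≠ 0 := fun i h => hw i (by rw [h]; rfl)
  -- rank-nullity
  have key : ∀ i : Fin k, Module.finrank ℂ (V.map (Delta (w i)).mulVecLin)
      + Module.finrank ℂ ↥(V ⊓ Submodule.span ℂ {w i}) = n := by
    intro i
    set f := (Delta (w i)).mulVecLin with hf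
    have h1 := LinearMap.finrank_range_add_finrank_ker (f ∘ₗ V.subtype)
    rw [LinearMap.range_comp, Submodule.range_subtype, LinearMap.ker_comp] at h1
    have h2 : Module.finrank ℂ ↥(Submodule.comap V.subtype (LinearMap.ker f))
        = Module.finrank ℂ ↥(V ⊓ Submodule.span ℂ {w i}) := by
      rw [← Submodule.finrank_map_subtype_eq V, Submodule.map_comap_subtype,
        hf, ker_delta hd (w i) (hw i)]
    rw [h2] at h1
    exact h1
  have hinf : ∀ i : Fin k, Module.finrank ℂ ↥(V ⊓ Submodule.span ℂ {w i})
      = if w i ∈ V then 1 else 0 := by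
    intro i
    by_cases h : w i ∈ V
    · rw [if_pos h, inf_eq_right.mpr (Submodule.span_le.mpr (by simpa using h)),
        finrank_span_singleton (hwne i)]
    · rw [if_neg h]
      have hbot : V ⊓ Submodule.span ℂ {w i} = ⊥ := by
        rw [eq_bot_iff]
        rintro x ⟨hxV, hxs⟩
        obtain ⟨c, rfl⟩ := Submodule.mem_span_singleton.mp hxs
        rcases eq_or_ne c 0 with rfl | hc
        · simp
        · exact absurd ((Submodule.smul_mem_iff V hc).mp hxV) h
      rw [hbot, finrank_bot]
  set N : ℕ := ∑ i : Fin k, if w i ∈ V then 1 else 0 with hN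
  have hNcard : ({i : Fin k | w i ∈ V}).ncard = N := by
    have hset : {i : Fin k | w i ∈ V} = ↑(Finset.univ.filter (fun i => w i ∈ V)) := by
      ext i; simp
    rw [hset, Set.ncard_coe_finset, Finset.card_filter, hN]
  have hsum : (∑ i : Fin k, Module.finrank ℂ (V.map (Delta (w i)).mulVecLin)) + N = k * n := by
    rw [hN, ← Finset.sum_add_distrib]
    have heq : (∑ i : Fin k, (Module.finrank ℂ (V.map (Delta (w i)).mulVecLin)
        + if w i ∈ V then 1 else 0)) = ∑ _i : Fin k, n :=
      Finset.sum_congr rfl (fun i _ => by rw [← hinf i]; exact key i)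
    rw [heq]
    simp [mul_comm]
  -- bound on N
  have hNle : (N : ℝ) ≤ (n : ℝ) / d * k := by
    rcases Nat.eq_zero_or_pos n with h0 | h0
    · have hVbot : V = ⊥ := Submodule.finrank_eq_zero.mp (hn.symm.trans h0)
      have hN0 : N = 0 := by
        rw [hN, hVbot]
        simp [Submodule.mem_bot, hwne]
      simp [hN0, h0]
    · rcases lt_or_ge n d with hlt | hge
      · have := hsub n h0 hlt V rfl
        rw [hNcard] at this
        exact this
      · have h1 : (N : ℝ) ≤ k := by
          have : N ≤ k := by
            rw [hN]
            calc ∑ i : Fin k, (if w i ∈ V then 1 else 0) ≤ ∑ i : Fin k, 1 :=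
              Finset.sum_le_sum (fun i _ => by split <;> omega)
            _ = k := by simp
          exact_mod_cast this
        have h2 : (k : ℝ) ≤ (n : ℝ) / d * k := by
          have hd0 : (0:ℝ) < d := by positivity
          have : (1:ℝ) ≤ (n:ℝ)/d := by
            rw [le_div_iff₀ hd0]; exact_mod_cast by simpa using hge
          nlinarith [Nat.cast_nonneg (α := ℝ) k]
        linarith
  -- conclude
  have hd0 : (0:ℝ) < d := by positivity
  have hcast : (∑ i : Fin k, ((Module.finrank ℂ (V.map (Delta (w i)).mulVecLin)) : ℝ))
      = (k : ℝ) * n - N := by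
    have := hsum
    have : ((∑ i : Fin k, Module.finrank ℂ (V.map (Delta (w i)).mulVecLin) : ℕ) : ℝ) + N
        = (k : ℝ) * n := by exact_mod_cast congrArg (Nat.cast : ℕ → ℝ) this
    push_cast at this ⊢
    linarith
  rw [hcast, Nat.cast_sub (by omega : 1 ≤ d)]
  have heq : (((d:ℝ) - 1) * k / d) * n = (k:ℝ) * n - (n:ℝ)/d * k := by
    field_simp
  linarith [hNle, heq.le, heq.ge]


/-- Claim 4.5: the matrices `Δ(w_1), …, Δ(w_k)` form a well-spread set. -/
theorem delta_wellSpread {d k : ℕ} (hd : 2 ≤ d) (w : Fin k → Fin d → ℂ)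
    (hw : ∀ i, w i ⟨0, by omega⟩ ≠ 0)
    (hsub : ∀ ℓ : ℕ, 0 < ℓ → ℓ < d → ∀ V : Submodule ℂ (Fin d → ℂ),
      Module.finrank ℂ V = ℓ →
      (({i : Fin k | w i ∈ V}).ncard : ℝ) ≤ ((ℓ : ℝ) / d) * k) :
    WellSpread (fun i => Delta (w i)) := by
  exact delta_aux_main hd w hw hsub
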